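/- Let X be a real Hilbert space, w, z ∈ X, D ⊆ X a set with ⟪z − x, w − x⟫ ≤ 0 for all x ∈ D, and D̂ = {x ∈ D : ‖x − w‖² ≥ r} with 0 < r < ‖w − z‖². Let F : D̂ → X satisfy ⟪F(x), w − x⟫ ≤ 0 on D̂, and let x : [t₀, ∞) → D̂ be C¹ with ẋ(t) = F(x(t)). If there exists an increasing sequence tₙ → ∞ with x(tₙ) → z strongly, then x(t) → z strongly as t → ∞. -/

import Mathlib

open Set Metric Filter
open scoped RealInnerProductSpace Topology

theorem stmt9 {X : Type*} [NormedAddCommGroup X] [InnerProductSpace ℝ X] [CompleteSpace X]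
    (w z : X) (D : Set X) (hD : ∀ x ∈ D, ⟪z - x, w - x⟫ ≤ 0)
    (r : ℝ) (hr : 0 < r) (hr' : r < ‖w - z‖ ^ 2)
    (F : X → X)
    (hF : ∀ y, y ∈ D → r ≤ ‖y - w‖ ^ 2 → ⟪F y, w - y⟫ ≤ 0)
    (t₀ : ℝ) (x : ℝ → X)
    (hmem : ∀ t ∈ Ici t₀, x t ∈ D ∧ r ≤ ‖x t - w‖ ^ 2)
    (hderiv : ∀ t ∈ Ici t₀, HasDerivAt x (F (x t)) t)
    (hC1 : ContinuousOn (fun t => F (x t)) (Ici t₀))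
    (tn : ℕ → ℝ) (htn₀ : ∀ n, t₀ ≤ tn n) (htnmono : StrictMono tn)
    (htn : Tendsto tn atTop atTop)
    (hconv : Tendsto (fun n => x (tn n)) atTop (𝓝 z)) :
    Tendsto x atTop (𝓝 z) := by
  set g : ℝ → ℝ := fun t => ⟪x t - w, x t - w⟫ with hg
  -- derivative of g
  have hgderiv : ∀ t ∈ Ici t₀, HasDerivAt g (2 * ⟪F (x t), x t - w⟫) t := by
    intro t ht
    have h1 : HasDerivAt (fun s => x s - w) (F (x t)) t := (hderiv t ht).sub_const w
    have := h1.inner ℝ h1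
    have heq : ⟪x t - w, F (x t)⟫ + ⟪F (x t), x t - w⟫ = 2 * ⟪F (x t), x t - w⟫ := by
      rw [real_inner_comm]; ring
    rw [heq] at this
    exact this
  -- g monotone on Ici t₀
  have hgmono : MonotoneOn g (Ici t₀) := by
    apply monotoneOn_of_deriv_nonneg (convex_Ici t₀)
    · intro t ht
      exact ((hgderiv t ht).continuousAt).continuousWithinAt
    · intro t ht
      rw [interior_Ici] at ht
      exact ((hgderiv t (mem_Ici.2 (le_of_lt (mem_Ioi.1 ht)))).differentiableAt).differentiableWithinAt
    · intro t ht
      rw [interior_Ici] at ht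
      rw [(hgderiv t (mem_Ici.2 (le_of_lt (mem_Ioi.1 ht)))).deriv]
      have hFle : ⟪F (x t), w - x t⟫ ≤ 0 :=
        hF (x t) (hmem t (mem_Ici.2 (le_of_lt (mem_Ioi.1 ht)))).1 (hmem t (mem_Ici.2 (le_of_lt (mem_Ioi.1 ht)))).2
      have : ⟪F (x t), x t - w⟫ = - ⟪F (x t), w - x t⟫ := by
        rw [← inner_neg_right]; congr 1; abel
      rw [this]; linarith
  -- g t = ‖x t - w‖^2
  have hgval : ∀ t, g t = ‖x t - w‖ ^ 2 := fun t => real_inner_self_eq_norm_sq _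
  -- key inequality: for t ≥ t₀, ‖x t - z‖^2 ≤ ‖w - z‖^2 - g t
  have hkey : ∀ t ∈ Ici t₀, ‖x t - z‖ ^ 2 ≤ ‖w - z‖ ^ 2 - g t := by
    intro t ht
    have hDx : ⟪z - x t, w - x t⟫ ≤ 0 := hD (x t) (hmem t ht).1
    have e1 : ‖w - z‖ ^ 2 = ‖w - x t‖ ^ 2 + 2 * ⟪w - x t, x t - z⟫ + ‖x t - z‖ ^ 2 := by
      rw [← norm_add_sq_real]; congr 1; abel
    have e2 : ⟪w - x t, x t - z⟫ = - ⟪z - x t, w - x t⟫ := by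
      rw [real_inner_comm, ← inner_neg_left]; congr 1; abel
    have e3 : g t = ‖w - x t‖ ^ 2 := by rw [hgval, norm_sub_rev]
    rw [e3]; nlinarith
  -- finish
  rw [Metric.tendsto_atTop]
  intro ε hε
  -- ‖x (tn n) - w‖^2 → ‖z - w‖^2
  have hlim : Tendsto (fun n => g (tn n)) atTop (𝓝 (‖z - w‖ ^ 2)) := by
    have : Tendsto (fun n => x (tn n) - w) atTop (𝓝 (z - w)) := hconv.sub_const w
    simpa only [hgval, Function.comp_def] using ((continuous_norm.tendsto _).comp this).pow 2
  have hzw : ‖z - w‖ ^ 2 = ‖w - z‖ ^ 2 := by rw [norm_sub_rev]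
  have hev : ∀ᶠ n in atTop, ‖w - z‖ ^ 2 - ε ^ 2 < g (tn n) := by
    rw [hzw] at hlim
    exact hlim.eventually (eventually_gt_nhds (by nlinarith))
  obtain ⟨n, hn⟩ := hev.exists
  refine ⟨tn n, fun t ht => ?_⟩
  have ht₀ : t ∈ Ici t₀ := le_trans (htn₀ n) ht
  have hmon : g (tn n) ≤ g t := hgmono (mem_Ici.2 (htn₀ n)) ht₀ ht
  have h1 : ‖x t - z‖ ^ 2 < ε ^ 2 := by
    have := hkey t ht₀
    nlinarith
  have h2 : ‖x t - z‖ < ε := by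
    nlinarith [norm_nonneg (x t - z)]
  rwa [dist_eq_norm]
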